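/- There exist truth-preserving translations between LTL_f and co-safe LTL: (i) there is a map T from LTL_f formulas to co-safe LTL formulas such that a finite trace σ (with the atom Last holding exactly at its final position) satisfies φ if and only if every infinite extension σ·σ' (with Last never holding in σ') satisfies T(φ); and (ii) every co-safe LTL formula φ, read as an LTL_f formula, satisfies: an infinite trace σ satisfies φ if and only if some finite prefix σ_{≤i} of σ satisfies φ. -/
import Mathlib


/-- LTL formulas over atoms `α`, with constants `tt`/`ff`, negation, conjunction,
disjunction, next `○` and until `U`. -/
inductive LTL (α : Type) : Type where
  | tt : LTL α
  | ff : LTL α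
  | atom : α → LTL α
  | not : LTL α → LTL α
  | and : LTL α → LTL α → LTL α
  | or : LTL α → LTL α → LTL α
  | next : LTL α → LTL α
  | untl : LTL α → LTL α → LTL α

/-- Satisfaction `⟨σ,i⟩ ⊨ φ` over infinite traces `σ : ℕ → Set α`. -/
def SatInf {α : Type} (σ : ℕ → Set α) : ℕ → LTL α → Prop
  | _, .tt => True
  | _, .ff => False
  | i, .atom p => p ∈ σ i
  | i, .not φ => ¬ SatInf σ i φ
  | i, .and φ ψ => SatInf σ i φ ∧ SatInf σ i ψ
  | i, .or φ ψ => SatInf σ i φ ∨ SatInf σ i ψ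
  | i, .next φ => SatInf σ (i + 1) φ
  | i, .untl φ ψ => ∃ j, i ≤ j ∧ SatInf σ j ψ ∧ ∀ k, i ≤ k → k < j → SatInf σ k φ

/-- Satisfaction `⟨σ,i⟩ ⊨ φ` over finite traces `σ : List (Set α)`;
positions of `σ` are the indices `< σ.length`. -/
def SatFin {α : Type} (σ : List (Set α)) : ℕ → LTL α → Prop
  | _, .tt => True
  | _, .ff => False
  | i, .atom p => p ∈ σ.getD i ∅
  | i, .not φ => ¬ SatFin σ i φ
  | i, .and φ ψ => SatFin σ i φ ∧ SatFin σ i ψ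
  | i, .or φ ψ => SatFin σ i φ ∨ SatFin σ i ψ
  | i, .next φ => i + 1 < σ.length ∧ SatFin σ (i + 1) φ
  | i, .untl φ ψ =>
      ∃ j, i ≤ j ∧ j < σ.length ∧ SatFin σ j ψ ∧ ∀ k, i ≤ k → k < j → SatFin σ k φ

/-- The co-safe fragment of LTL: negation on atoms only. -/
inductive CoSafe {α : Type} : LTL α → Prop
  | atom (p : α) : CoSafe (.atom p)
  | natom (p : α) : CoSafe (.not (.atom p))
  | and {φ ψ : LTL α} : CoSafe φ → CoSafe ψ → CoSafe (.and φ ψ)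
  | or {φ ψ : LTL α} : CoSafe φ → CoSafe ψ → CoSafe (.or φ ψ)
  | next {φ : LTL α} : CoSafe φ → CoSafe (.next φ)
  | untl {φ ψ : LTL α} : CoSafe φ → CoSafe ψ → CoSafe (.untl φ ψ)

/-- The finite prefix `σ₀, …, σᵢ` of an infinite trace `σ`. -/
def prefixUpTo {α : Type} (σ : ℕ → Set α) (i : ℕ) : List (Set α) :=
  (List.range (i + 1)).map σ

/-- Concatenation `w · σ'` of a finite trace with an infinite trace. -/
def appendInf {α : Type} (w : List (Set α)) (σ' : ℕ → Set α) : ℕ → Set α :=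
  fun n => w.getD n (σ' (n - w.length))

/-- LTL_f formulas over atoms `α` in negation normal form, with `always` (□)
and weak next `wnext` (•) primitive.  The distinguished atom `Last` is not in
`α`; traces assign truth values to atoms in `Option α`, where `none` plays the
role of `Last` and `some p` the role of `p ∈ AP`. -/
inductive LTLf (α : Type) : Type where
  | atom : α → LTLf α
  | natom : α → LTLf α
  | and : LTLf α → LTLf α → LTLf α
  | or : LTLf α → LTLf α → LTLf α
  | next : LTLf α → LTLf α
  | untl : LTLf α → LTLf α → LTLf α
  | always : LTLf α → LTLf α
  | wnext : LTLf α → LTLf α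

/-- Satisfaction of LTL_f formulas over finite traces of truth assignments
over `AP ∪ {Last}` (encoded as `Set (Option α)`, with `Last := none`). -/
def SatLTLf {α : Type} (σ : List (Set (Option α))) : ℕ → LTLf α → Prop
  | i, .atom p => some p ∈ σ.getD i ∅
  | i, .natom p => some p ∉ σ.getD i ∅
  | i, .and φ ψ => SatLTLf σ i φ ∧ SatLTLf σ i ψ
  | i, .or φ ψ => SatLTLf σ i φ ∨ SatLTLf σ i ψ
  | i, .next φ => i + 1 < σ.length ∧ SatLTLf σ (i + 1) φ
  | i, .untl φ ψ =>
      ∃ j, i ≤ j ∧ j < σ.length ∧ SatLTLf σ j ψ ∧ ∀ k, i ≤ k → k < j → SatLTLf σ k φ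
  | i, .always φ => ∀ j, i ≤ j → j < σ.length → SatLTLf σ j φ
  | i, .wnext φ => i + 1 < σ.length → SatLTLf σ (i + 1) φ

/-- The translation τ from LTL_f to co-safe LTL: it commutes with atoms,
negated atoms, ∧, ∨, ○ and U, and τ(□φ) = τ(φ) U (Last ∧ τ(φ)),
τ(•φ) = ¬Last → ○τ(φ) (i.e. Last ∨ ○τ(φ)). -/
def tauTr {α : Type} : LTLf α → LTL (Option α)
  | .atom p => .atom (some p)
  | .natom p => .not (.atom (some p))
  | .and φ ψ => .and (tauTr φ) (tauTr ψ)
  | .or φ ψ => .or (tauTr φ) (tauTr ψ)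
  | .next φ => .next (tauTr φ)
  | .untl φ ψ => .untl (tauTr φ) (tauTr ψ)
  | .always φ => .untl (tauTr φ) (.and (.atom none) (tauTr φ))
  | .wnext φ => .or (.atom none) (.next (tauTr φ))
/-- A truth-preserving translation from LTL_f to co-safe LTL (a variant of τ
that also guards `next` and `until` with the `Last` marker). -/
def trT {α : Type} : LTLf α → LTL (Option α)
  | .atom p => .atom (some p)
  | .natom p => .not (.atom (some p))
  | .and φ ψ => .and (trT φ) (trT ψ)
  | .or φ ψ => .or (trT φ) (trT ψ)
  | .next φ => .and (.not (.atom none)) (.next (trT φ))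
  | .untl φ ψ => .untl (.and (trT φ) (.not (.atom none))) (trT ψ)
  | .always φ => .untl (trT φ) (.and (.atom none) (trT φ))
  | .wnext φ => .or (.atom none) (.next (trT φ))

lemma trT_cosafe {α : Type} (φ : LTLf α) : CoSafe (trT φ) := by
  induction φ with
  | atom p => exact CoSafe.atom _
  | natom p => exact CoSafe.natom _
  | and φ ψ ih1 ih2 => exact CoSafe.and ih1 ih2
  | or φ ψ ih1 ih2 => exact CoSafe.or ih1 ih2
  | next φ ih => exact CoSafe.and (CoSafe.natom _) (CoSafe.next ih)
  | untl φ ψ ih1 ih2 => exact CoSafe.untl (CoSafe.and ih1 (CoSafe.natom _)) ih2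
  | always φ ih => exact CoSafe.untl ih (CoSafe.and (CoSafe.atom _) ih)
  | wnext φ ih => exact CoSafe.or (CoSafe.atom _) (CoSafe.next ih)

lemma appendInf_lt {α : Type} (σ : List (Set α)) (σ' : ℕ → Set α) {i : ℕ}
    (h : i < σ.length) : appendInf σ σ' i = σ.getD i ∅ := by
  unfold appendInf
  rw [List.getD_eq_getElem _ _ h, List.getD_eq_getElem _ _ h]

lemma appendInf_ge {α : Type} (σ : List (Set α)) (σ' : ℕ → Set α) {i : ℕ}
    (h : σ.length ≤ i) : appendInf σ σ' i = σ' (i - σ.length) := by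
  unfold appendInf
  rw [List.getD_eq_default _ _ h]

lemma main1 {α : Type} (σ : List (Set (Option α))) (hne : σ ≠ [])
    (hLast : ∀ i < σ.length, ((none : Option α) ∈ σ.getD i ∅ ↔ i = σ.length - 1))
    (σ' : ℕ → Set (Option α)) (hσ' : ∀ n, (none : Option α) ∉ σ' n) :
    ∀ (φ : LTLf α) (i : ℕ), i < σ.length →
      (SatLTLf σ i φ ↔ SatInf (appendInf σ σ') i (trT φ)) := by
  have hlen : 0 < σ.length := List.length_pos_iff.mpr hne
  have hN : ∀ i, ((none : Option α) ∈ appendInf σ σ' i ↔ i = σ.length - 1) := by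
    intro i
    rcases lt_or_ge i σ.length with h | h
    · rw [appendInf_lt σ σ' h]; exact hLast i h
    · rw [appendInf_ge σ σ' h]
      constructor
      · intro hc; exact absurd hc (hσ' _)
      · intro hc; omega
  intro φ
  induction φ with
  | atom p =>
    intro i hi
    simp only [SatLTLf, SatInf, trT, appendInf_lt σ σ' hi]
  | natom p =>
    intro i hi
    simp only [SatLTLf, SatInf, trT, appendInf_lt σ σ' hi]
  | and φ ψ ih1 ih2 =>
    intro i hi
    simp only [SatLTLf, SatInf, trT, ih1 i hi, ih2 i hi]
  | or φ ψ ih1 ih2 =>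
    intro i hi
    simp only [SatLTLf, SatInf, trT, ih1 i hi, ih2 i hi]
  | next φ ih =>
    intro i hi
    simp only [SatLTLf, SatInf, trT, hN i]
    constructor
    · rintro ⟨h1, h2⟩
      exact ⟨by omega, (ih (i + 1) h1).mp h2⟩
    · rintro ⟨h1, h2⟩
      have hlt : i + 1 < σ.length := by omega
      exact ⟨hlt, (ih (i + 1) hlt).mpr h2⟩
  | untl φ ψ ih1 ih2 =>
    intro i hi
    simp only [SatLTLf, SatInf, trT, hN]
    constructor
    · rintro ⟨j, hij, hjlen, hψ, hk⟩
      refine ⟨j, hij, (ih2 j hjlen).mp hψ, ?_⟩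
      intro k hik hkj
      have hklen : k < σ.length := lt_trans hkj hjlen
      exact ⟨(ih1 k hklen).mp (hk k hik hkj), by omega⟩
    · rintro ⟨j, hij, hψ, hk⟩
      have hjlen : j < σ.length := by
        by_contra hc
        have h1 : i ≤ σ.length - 1 := by omega
        have h2 : σ.length - 1 < j := by omega
        exact (hk (σ.length - 1) h1 h2).2 rfl
      refine ⟨j, hij, hjlen, (ih2 j hjlen).mpr hψ, ?_⟩
      intro k hik hkj
      have hklen : k < σ.length := lt_trans hkj hjlen
      exact (ih1 k hklen).mpr (hk k hik hkj).1
  | always φ ih =>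
    intro i hi
    simp only [SatLTLf, SatInf, trT, hN]
    constructor
    · intro h
      refine ⟨σ.length - 1, by omega, ⟨rfl, ?_⟩, ?_⟩
      · exact (ih (σ.length - 1) (by omega)).mp (h (σ.length - 1) (by omega) (by omega))
      · intro k hik hkj
        exact (ih k (by omega)).mp (h k hik (by omega))
    · rintro ⟨j, hij, ⟨hj, hφj⟩, hk⟩
      intro j' hij' hj'len
      rcases eq_or_lt_of_le (show j' ≤ σ.length - 1 by omega) with heq | hlt
      · have hjj : j' = j := by omega
        exact (ih j' hj'len).mpr (hjj ▸ hφj)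
      · exact (ih j' hj'len).mpr (hk j' hij' (by omega))
  | wnext φ ih =>
    intro i hi
    simp only [SatLTLf, SatInf, trT, hN i]
    by_cases hl : i = σ.length - 1
    · constructor
      · intro _; exact Or.inl hl
      · intro _ h1; omega
    · have hlt : i + 1 < σ.length := by omega
      constructor
      · intro h
        exact Or.inr ((ih (i + 1) hlt).mp (h hlt))
      · rintro (h | h)
        · omega
        · intro _; exact (ih (i + 1) hlt).mpr h
lemma len_prefixUpTo {α : Type} (σ : ℕ → Set α) (i : ℕ) :
    (prefixUpTo σ i).length = i + 1 := by
  simp [prefixUpTo]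

lemma getD_prefixUpTo {α : Type} (σ : ℕ → Set α) {i j : ℕ} (h : j ≤ i) :
    (prefixUpTo σ i).getD j ∅ = σ j := by
  have hj : j < (prefixUpTo σ i).length := by rw [len_prefixUpTo]; omega
  rw [List.getD_eq_getElem _ _ hj]
  simp [prefixUpTo]

lemma satfin_mono {α : Type} {σ : ℕ → Set α} {φ : LTL α} (h : CoSafe φ) :
    ∀ {j i i' : ℕ}, j ≤ i → i ≤ i' →
      SatFin (prefixUpTo σ i) j φ → SatFin (prefixUpTo σ i') j φ := by
  induction h with
  | atom p =>
    intro j i i' hji hii' hs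
    simp only [SatFin] at *
    rw [getD_prefixUpTo σ (le_trans hji hii')]
    rw [getD_prefixUpTo σ hji] at hs
    exact hs
  | natom p =>
    intro j i i' hji hii' hs
    simp only [SatFin] at *
    rw [getD_prefixUpTo σ (le_trans hji hii')]
    rw [getD_prefixUpTo σ hji] at hs
    exact hs
  | and h1 h2 ih1 ih2 =>
    intro j i i' hji hii' hs
    exact ⟨ih1 hji hii' hs.1, ih2 hji hii' hs.2⟩
  | or h1 h2 ih1 ih2 =>
    intro j i i' hji hii' hs
    rcases hs with hs | hs
    · exact Or.inl (ih1 hji hii' hs)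
    · exact Or.inr (ih2 hji hii' hs)
  | next h1 ih =>
    intro j i i' hji hii' hs
    obtain ⟨hl, hs⟩ := hs
    rw [len_prefixUpTo] at hl
    refine ⟨by rw [len_prefixUpTo]; omega, ih (by omega) hii' hs⟩
  | untl h1 h2 ih1 ih2 =>
    intro j i i' hji hii' hs
    obtain ⟨j', hjj', hl, hψ, hk⟩ := hs
    rw [len_prefixUpTo] at hl
    refine ⟨j', hjj', by rw [len_prefixUpTo]; omega, ih2 (by omega) hii' hψ, ?_⟩
    intro k h1k h2k
    exact ih1 (by omega) hii' (hk k h1k h2k)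

lemma satfin_to_inf {α : Type} {σ : ℕ → Set α} {φ : LTL α} (h : CoSafe φ) :
    ∀ {j i : ℕ}, j ≤ i → SatFin (prefixUpTo σ i) j φ → SatInf σ j φ := by
  induction h with
  | atom p =>
    intro j i hji hs
    simp only [SatFin] at hs
    rw [getD_prefixUpTo σ hji] at hs
    exact hs
  | natom p =>
    intro j i hji hs
    simp only [SatFin, SatInf] at *
    rw [getD_prefixUpTo σ hji] at hs
    exact hs
  | and h1 h2 ih1 ih2 =>
    intro j i hji hs
    exact ⟨ih1 hji hs.1, ih2 hji hs.2⟩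
  | or h1 h2 ih1 ih2 =>
    intro j i hji hs
    rcases hs with hs | hs
    · exact Or.inl (ih1 hji hs)
    · exact Or.inr (ih2 hji hs)
  | next h1 ih =>
    intro j i hji hs
    obtain ⟨hl, hs⟩ := hs
    rw [len_prefixUpTo] at hl
    exact ih (i := i) (by omega) hs
  | untl h1 h2 ih1 ih2 =>
    intro j i hji hs
    obtain ⟨j', hjj', hl, hψ, hk⟩ := hs
    rw [len_prefixUpTo] at hl
    exact ⟨j', hjj', ih2 (i := i) (by omega) hψ,
      fun k h1k h2k => ih1 (i := i) (by omega) (hk k h1k h2k)⟩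

lemma satinf_to_fin {α : Type} {σ : ℕ → Set α} {φ : LTL α} (h : CoSafe φ) :
    ∀ {j : ℕ}, SatInf σ j φ → ∃ i, j ≤ i ∧ SatFin (prefixUpTo σ i) j φ := by
  induction h with
  | atom p =>
    intro j hs
    refine ⟨j, le_refl j, ?_⟩
    simp only [SatFin]
    rw [getD_prefixUpTo σ (le_refl j)]
    exact hs
  | natom p =>
    intro j hs
    refine ⟨j, le_refl j, ?_⟩
    simp only [SatFin, SatInf] at *
    rw [getD_prefixUpTo σ (le_refl j)]
    exact hs
  | and h1 h2 ih1 ih2 =>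
    intro j hs
    obtain ⟨i1, hi1, hs1⟩ := ih1 hs.1
    obtain ⟨i2, hi2, hs2⟩ := ih2 hs.2
    exact ⟨max i1 i2, le_trans hi1 (le_max_left _ _),
      satfin_mono h1 hi1 (le_max_left _ _) hs1,
      satfin_mono h2 hi2 (le_max_right _ _) hs2⟩
  | or h1 h2 ih1 ih2 =>
    intro j hs
    rcases hs with hs | hs
    · obtain ⟨i, hi, hs⟩ := ih1 hs
      exact ⟨i, hi, Or.inl hs⟩
    · obtain ⟨i, hi, hs⟩ := ih2 hs
      exact ⟨i, hi, Or.inr hs⟩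
  | next h1 ih =>
    intro j hs
    obtain ⟨i, hi, hsf⟩ := ih hs
    refine ⟨i, by omega, ?_, hsf⟩
    rw [len_prefixUpTo]; omega
  | untl h1 h2 ih1 ih2 =>
    intro j hs
    classical
    obtain ⟨j', hjj', hψ, hk⟩ := hs
    obtain ⟨iψ, hiψ1, hiψ2⟩ := ih2 hψ
    have hf := fun k (h1k : j ≤ k) (h2k : k < j') => ih1 (hk k h1k h2k)
    choose! f hf1 hf2 using hf
    set I := max iψ ((Finset.Ico j j').sup f) with hI
    refine ⟨I, by omega, j', hjj', ?_, ?_, ?_⟩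
    · rw [len_prefixUpTo]; omega
    · exact satfin_mono h2 hiψ1 (le_max_left _ _) hiψ2
    · intro k h1k h2k
      have hmem : k ∈ Finset.Ico j j' := Finset.mem_Ico.mpr ⟨h1k, h2k⟩
      have hle : f k ≤ I := le_trans (Finset.le_sup hmem) (le_max_right _ _)
      exact satfin_mono h1 (hf1 k h1k h2k) hle (hf2 k h1k h2k)

/-- There exist truth-preserving translations between LTL_f and
co-safe LTL: (i) there is a map `T` from LTL_f formulas to co-safe LTL formulas
such that a (nonempty) finite trace σ, with Last holding exactly at its final
position, satisfies φ iff every infinite extension σ·σ' with Last never holding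
in σ' satisfies `T φ`; and (ii) every co-safe LTL formula φ, read as an LTL_f
formula (i.e. interpreted over finite traces), satisfies: an infinite trace σ
satisfies φ iff some finite prefix σ_{≤i} of σ satisfies φ. -/
theorem truth_preserving_translations {AP : Type} :
    (∃ T : LTLf AP → LTL (Option AP),
      (∀ φ : LTLf AP, CoSafe (T φ)) ∧
      ∀ σ : List (Set (Option AP)), σ ≠ [] →
        (∀ i < σ.length,
            ((none : Option AP) ∈ σ.getD i ∅ ↔ i = σ.length - 1)) →
        ∀ φ : LTLf AP,
          (SatLTLf σ 0 φ ↔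
            ∀ σ' : ℕ → Set (Option AP), (∀ n, (none : Option AP) ∉ σ' n) →
              SatInf (appendInf σ σ') 0 (T φ))) ∧
    (∀ (φ : LTL AP), CoSafe φ → ∀ σ : ℕ → Set AP,
        (SatInf σ 0 φ ↔ ∃ i : ℕ, SatFin (prefixUpTo σ i) 0 φ)) := by
  constructor
  · refine ⟨trT, trT_cosafe, ?_⟩
    intro σ hne hLast φ
    have hlen : 0 < σ.length := List.length_pos_iff.mpr hne
    constructor
    · intro h σ' hσ'
      exact (main1 σ hne hLast σ' hσ' φ 0 hlen).mp h
    · intro h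
      refine (main1 σ hne hLast (fun _ => ∅) (fun n => Set.notMem_empty _) φ 0 hlen).mpr ?_
      exact h _ (fun n => Set.notMem_empty _)
  · intro φ hc σ
    constructor
    · intro h
      obtain ⟨i, _, hs⟩ := satinf_to_fin hc h
      exact ⟨i, hs⟩
    · rintro ⟨i, hs⟩
      exact satfin_to_inf hc (Nat.zero_le i) hs
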